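/- Rényi-2 entangling rate bound: let ρ_{AB} be a density matrix on H_A ⊗ H_B and V = ∑_{i,j} c_{ij} A_i ⊗ B_j with Hermitian A_i, B_j of operator norm 1. Define Γ = 2i · tr(ρ_A · tr_B([V, ρ_{AB}])) / tr(ρ_A²), where ρ_A = tr_B ρ_{AB}. Then |Γ| ≤ 4 ∑_{i,j} |c_{ij}|. -/

import Mathlib

open Matrix
open scoped ComplexOrder Kronecker

/-- Partial trace over the second tensor factor. -/
noncomputable def ptraceB {a b : ℕ} (M : Matrix (Fin a × Fin b) (Fin a × Fin b) ℂ) :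
    Matrix (Fin a) (Fin a) ℂ :=
  fun i k => ∑ j, M (i, j) (k, j)

open scoped MatrixOrder in
lemma Matrix.posSemidef_iff_eq_transpose_mul_self {n : Type*} [Fintype n] [DecidableEq n]
    {A : Matrix n n ℂ} : A.PosSemidef ↔ ∃ B : Matrix n n ℂ, A = Bᴴ * B :=
  ⟨fun h => by
    obtain ⟨B, hB⟩ := CStarAlgebra.nonneg_iff_eq_star_mul_self.mp h.nonneg
    exact ⟨B, hB⟩, by
    rintro ⟨B, rfl⟩
    exact posSemidef_conjTranspose_mul_self B⟩

namespace Renyi2Aux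

variable {n m : Type*} [Fintype n] [Fintype m]

/-- Embedding of matrices into Euclidean space (for Frobenius norm facts). -/
noncomputable def emb (M : Matrix n m ℂ) : EuclideanSpace ℂ (n × m) :=
  (WithLp.equiv 2 _).symm (fun p => M p.1 p.2)

/-- Frobenius norm. -/
noncomputable def fn (M : Matrix n m ℂ) : ℝ := ‖emb M‖

lemma fn_nonneg (M : Matrix n m ℂ) : 0 ≤ fn M := norm_nonneg _

lemma inner_emb (M N : Matrix n m ℂ) :
    (inner ℂ (emb M) (emb N) : ℂ) = (Mᴴ * N).trace := by
  have h1 : (inner ℂ (emb M) (emb N) : ℂ)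
      = ∑ p : n × m, (starRingEnd ℂ) (M p.1 p.2) * N p.1 p.2 := by
    rw [PiLp.inner_apply]
    refine Finset.sum_congr rfl fun p _ => ?_
    simp [emb, RCLike.inner_apply, mul_comm]
  rw [h1, Fintype.sum_prod_type]
  simp only [trace, diag_apply, mul_apply, conjTranspose_apply]
  rw [Finset.sum_comm]
  rfl

lemma fn_sq (M : Matrix n m ℂ) : fn M ^ 2 = ((Mᴴ * M).trace).re := by
  rw [fn, norm_sq_eq_re_inner (𝕜 := ℂ), inner_emb]
  rfl

lemma fn_eq_sqrt (M : Matrix n m ℂ) : fn M = Real.sqrt ((Mᴴ * M).trace).re := by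
  rw [← fn_sq, Real.sqrt_sq (fn_nonneg M)]

lemma fn_conjTranspose (M : Matrix n m ℂ) : fn Mᴴ = fn M := by
  rw [fn_eq_sqrt, fn_eq_sqrt, conjTranspose_conjTranspose, trace_mul_comm]

lemma fn_transpose (M : Matrix n m ℂ) : fn Mᵀ = fn M := by
  rw [fn_eq_sqrt, fn_eq_sqrt]
  congr 2
  simp only [trace, diag_apply, mul_apply, conjTranspose_apply, transpose_apply]
  rw [Finset.sum_comm]

lemma trace_CS (M N : Matrix n m ℂ) : ‖(Mᴴ * N).trace‖ ≤ fn M * fn N := by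
  rw [← inner_emb]
  exact norm_inner_le_norm _ _

lemma fn_sub_le (M N : Matrix n m ℂ) : fn (M - N) ≤ fn M + fn N := by
  have : emb (M - N) = emb M - emb N := rfl
  rw [fn, this]
  exact (norm_sub_le _ _).trans (by rw [fn, fn])

lemma fn_mul_right_le [DecidableEq m] (M : Matrix n m ℂ) (A : Matrix m m ℂ)
    (h : ((1 : Matrix m m ℂ) - A * Aᴴ).PosSemidef) : fn (M * A) ≤ fn M := by
  obtain ⟨C, hC⟩ := posSemidef_iff_eq_transpose_mul_self.mp h
  rw [fn_eq_sqrt, fn_eq_sqrt]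
  apply Real.sqrt_le_sqrt
  have h1 : ((M * A)ᴴ * (M * A)).trace = ((Mᴴ * M) * (A * Aᴴ)).trace := by
    rw [conjTranspose_mul]
    have e : Aᴴ * Mᴴ * (M * A) = Aᴴ * (Mᴴ * (M * A)) := by simp only [Matrix.mul_assoc]
    rw [e, Matrix.trace_mul_comm Aᴴ (Mᴴ * (M * A))]
    congr 1
    simp only [Matrix.mul_assoc]
  have h2 : ((M * Cᴴ)ᴴ * (M * Cᴴ)).trace = ((Mᴴ * M) * (Cᴴ * C)).trace := by
    rw [conjTranspose_mul, conjTranspose_conjTranspose]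
    have e : C * Mᴴ * (M * Cᴴ) = C * (Mᴴ * (M * Cᴴ)) := by simp only [Matrix.mul_assoc]
    rw [e, Matrix.trace_mul_comm C (Mᴴ * (M * Cᴴ))]
    congr 1
    simp only [Matrix.mul_assoc]
  have key : ((M * A)ᴴ * (M * A)).trace + ((M * Cᴴ)ᴴ * (M * Cᴴ)).trace = (Mᴴ * M).trace := by
    rw [h1, h2, ← hC, mul_sub, mul_one, trace_sub]
    ring
  have h3 : 0 ≤ (((M * Cᴴ)ᴴ * (M * Cᴴ)).trace).re := by
    rw [← fn_sq]; positivity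
  have := congrArg Complex.re key
  simp only [Complex.add_re] at this
  linarith

lemma fn_mul_left_le [DecidableEq n] (A : Matrix n n ℂ) (M : Matrix n m ℂ)
    (h : ((1 : Matrix n n ℂ) - Aᴴ * A).PosSemidef) : fn (A * M) ≤ fn M := by
  have h' : ((1 : Matrix n n ℂ) - Aᴴ * (Aᴴ)ᴴ).PosSemidef := by
    simpa using h
  calc fn (A * M) = fn ((A * M)ᴴ) := (fn_conjTranspose _).symm
    _ = fn (Mᴴ * Aᴴ) := by rw [conjTranspose_mul]
    _ ≤ fn Mᴴ := fn_mul_right_le Mᴴ Aᴴ h'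
    _ = fn M := fn_conjTranspose _

/-- Hermitian matrix with all eigenvalues within `[-1,1]` is a contraction: `1 - A*A ≥ 0`. -/
lemma one_sub_sq_psd [DecidableEq n] {A : Matrix n n ℂ} (hA : A.IsHermitian)
    (h : ∀ x, |hA.eigenvalues x| ≤ 1) : ((1 : Matrix n n ℂ) - A * A).PosSemidef := by
  set U : Matrix n n ℂ := (hA.eigenvectorUnitary : Matrix n n ℂ) with hU
  set D : Matrix n n ℂ := diagonal (RCLike.ofReal ∘ hA.eigenvalues) with hD
  have hUU : U * star U = 1 := (Matrix.mem_unitaryGroup_iff).mp hA.eigenvectorUnitary.2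
  have hUU' : star U * U = 1 := (Matrix.mem_unitaryGroup_iff').mp hA.eigenvectorUnitary.2
  have hsp : A = U * D * star U := hA.spectral_theorem
  have hAA : A * A = U * (D * D) * star U := by
    rw [hsp]
    calc U * D * star U * (U * D * star U) = U * (D * ((star U * U) * (D * star U))) := by
          simp only [mul_assoc]
      _ = U * (D * D) * star U := by rw [hUU', one_mul]; simp only [mul_assoc]
  have hone : (1 : Matrix n n ℂ) = U * 1 * star U := by rw [mul_one, hUU]
  have hdiff : (1 : Matrix n n ℂ) - A * A = U * (1 - D * D) * star U := by
    rw [hAA, mul_sub, sub_mul, ← hone]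
  rw [hdiff, Matrix.star_eq_conjTranspose]
  apply Matrix.PosSemidef.mul_mul_conjTranspose_same
  have : (1 : Matrix n n ℂ) - D * D
      = diagonal (fun x => ((1 - hA.eigenvalues x ^ 2 : ℝ) : ℂ)) := by
    rw [hD, diagonal_mul_diagonal, ← diagonal_one, diagonal_sub]
    congr 1; ext x
    simp [sq]
  rw [this]
  rw [posSemidef_diagonal_iff]
  intro x
  have hx := abs_le.mp (h x)
  have : (0 : ℝ) ≤ 1 - hA.eigenvalues x ^ 2 := by nlinarith [hx.1, hx.2]
  exact_mod_cast Complex.zero_le_real.mpr this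

lemma one_kron_conjTranspose [DecidableEq n] (B : Matrix m m ℂ) :
    ((1 : Matrix n n ℂ) ⊗ₖ B)ᴴ = (1 : Matrix n n ℂ) ⊗ₖ Bᴴ := by
  ext ⟨i, j⟩ ⟨k, l⟩
  by_cases h : i = k
  · subst h; simp
  · simp [conjTranspose_apply, one_apply, h, Ne.symm h]

lemma one_kron_herm [DecidableEq n] {B : Matrix m m ℂ} (hB : B.IsHermitian) :
    ((1 : Matrix n n ℂ) ⊗ₖ B).IsHermitian := by
  unfold Matrix.IsHermitian
  rw [one_kron_conjTranspose, hB.eq]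

lemma kron_sub_left [DecidableEq n] (X Y : Matrix n n ℂ) (B : Matrix m m ℂ) :
    (X - Y) ⊗ₖ B = X ⊗ₖ B - Y ⊗ₖ B := by
  ext ⟨i, j⟩ ⟨k, l⟩
  simp [sub_mul]

lemma kron_sub_right [DecidableEq n] (X : Matrix n n ℂ) (B C : Matrix m m ℂ) :
    X ⊗ₖ (B - C) = X ⊗ₖ B - X ⊗ₖ C := by
  ext ⟨i, j⟩ ⟨k, l⟩
  simp [mul_sub]

lemma one_kron_contr [DecidableEq n] [DecidableEq m] {B : Matrix m m ℂ}
    (h : ((1 : Matrix m m ℂ) - B * B).PosSemidef) :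
    ((1 : Matrix (n × m) (n × m) ℂ) - ((1 : Matrix n n ℂ) ⊗ₖ B) * ((1 : Matrix n n ℂ) ⊗ₖ B)).PosSemidef := by
  obtain ⟨C, hC⟩ := posSemidef_iff_eq_transpose_mul_self.mp h
  have h1 : ((1 : Matrix n n ℂ) ⊗ₖ B) * ((1 : Matrix n n ℂ) ⊗ₖ B)
      = (1 : Matrix n n ℂ) ⊗ₖ (B * B) := by
    rw [← Matrix.mul_kronecker_mul, Matrix.one_mul]
  have h2 : (1 : Matrix (n × m) (n × m) ℂ) - (1 : Matrix n n ℂ) ⊗ₖ (B * B)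
      = (1 : Matrix n n ℂ) ⊗ₖ ((1 : Matrix m m ℂ) - B * B) := by
    rw [kron_sub_right, Matrix.one_kronecker_one]
  rw [h1, h2, hC]
  have h3 : (1 : Matrix n n ℂ) ⊗ₖ (Cᴴ * C)
      = ((1 : Matrix n n ℂ) ⊗ₖ C)ᴴ * ((1 : Matrix n n ℂ) ⊗ₖ C) := by
    rw [one_kron_conjTranspose, ← Matrix.mul_kronecker_mul, Matrix.one_mul]
  rw [h3]
  exact posSemidef_conjTranspose_mul_self _

end Renyi2Aux

section PtraceLemmas

open Renyi2Aux

lemma trace_mul_ptraceB {a b : ℕ} (Y : Matrix (Fin a) (Fin a) ℂ)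
    (M : Matrix (Fin a × Fin b) (Fin a × Fin b) ℂ) :
    (Y * ptraceB M).trace = ((Y ⊗ₖ (1 : Matrix (Fin b) (Fin b) ℂ)) * M).trace := by
  simp only [trace, diag_apply, mul_apply, ptraceB, kroneckerMap_apply, one_apply,
    Fintype.sum_prod_type, mul_ite, mul_one, mul_zero, ite_mul, zero_mul,
    Finset.sum_ite_eq, Finset.sum_ite_eq', Finset.mem_univ, if_true, Finset.mul_sum,
    Finset.sum_mul]
  exact Finset.sum_congr rfl fun x _ => Finset.sum_comm

lemma left_kron_mul_apply {a b : ℕ} (B : Matrix (Fin b) (Fin b) ℂ)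
    (M : Matrix (Fin a × Fin b) (Fin a × Fin b) ℂ) (i : Fin a) (j : Fin b)
    (q : Fin a × Fin b) :
    ((((1 : Matrix (Fin a) (Fin a) ℂ)) ⊗ₖ B) * M) (i, j) q = ∑ j', B j j' * M (i, j') q := by
  rw [mul_apply, Fintype.sum_prod_type, Finset.sum_comm]
  simp [kroneckerMap_apply, one_apply, ite_mul, zero_mul]

lemma mul_one_kron_apply {N α : Type*} [Fintype N] [DecidableEq N] [Fintype α] {b : ℕ}
    (T : Matrix α (N × Fin b) ℂ) (B : Matrix (Fin b) (Fin b) ℂ) (x : α) (n : N) (j4 : Fin b) :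
    (T * (((1 : Matrix N N ℂ)) ⊗ₖ B)) x (n, j4) = ∑ j, T x (n, j) * B j j4 := by
  rw [mul_apply, Fintype.sum_prod_type, Finset.sum_comm]
  simp [kroneckerMap_apply, one_apply, mul_ite, mul_zero, ite_mul, zero_mul]

/-- The reshaping of `S`. -/
noncomputable def resh {a b : ℕ} (S : Matrix (Fin a × Fin b) (Fin a × Fin b) ℂ) :
    Matrix (Fin a) ((Fin a × Fin b) × Fin b) ℂ :=
  Matrix.of fun i mj => S mj.1 (i, mj.2)

lemma ptraceB_structure {a b : ℕ} (S : Matrix (Fin a × Fin b) (Fin a × Fin b) ℂ)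
    (B : Matrix (Fin b) (Fin b) ℂ) :
    ptraceB (((1 : Matrix (Fin a) (Fin a) ℂ) ⊗ₖ B) * (Sᴴ * S)) =
      (resh S * ((1 : Matrix (Fin a × Fin b) (Fin a × Fin b) ℂ) ⊗ₖ B) * (resh S)ᴴ)ᵀ := by
  ext i k
  show (∑ j, ((((1 : Matrix (Fin a) (Fin a) ℂ) ⊗ₖ B) * (Sᴴ * S)) (i, j) (k, j)))
      = (resh S * ((1 : Matrix (Fin a × Fin b) (Fin a × Fin b) ℂ) ⊗ₖ B) * (resh S)ᴴ) k i
  have hL : ∀ j : Fin b, ((((1 : Matrix (Fin a) (Fin a) ℂ) ⊗ₖ B) * (Sᴴ * S)) (i, j) (k, j))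
      = ∑ j', ∑ m, B j j' * (star (S m (i, j')) * S m (k, j)) := by
    intro j
    rw [left_kron_mul_apply]
    refine Finset.sum_congr rfl fun j' _ => ?_
    rw [mul_apply, Finset.mul_sum]
    refine Finset.sum_congr rfl fun m _ => ?_
    rw [conjTranspose_apply]
  have hR : (resh S * ((1 : Matrix (Fin a × Fin b) (Fin a × Fin b) ℂ) ⊗ₖ B) * (resh S)ᴴ) k i
      = ∑ m, ∑ j', ∑ j, S m (k, j) * B j j' * star (S m (i, j')) := by
    rw [mul_apply, Fintype.sum_prod_type]
    refine Finset.sum_congr rfl fun m _ => Finset.sum_congr rfl fun j' _ => ?_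
    rw [mul_one_kron_apply, conjTranspose_apply, Finset.sum_mul]
    refine Finset.sum_congr rfl fun j _ => ?_
    simp [resh]
  simp only [hL, hR]
  trans (∑ j' : Fin b, ∑ j : Fin b, ∑ m : Fin a × Fin b,
      B j j' * (star (S m (i, j')) * S m (k, j)))
  · exact Finset.sum_comm
  trans (∑ j' : Fin b, ∑ m : Fin a × Fin b, ∑ j : Fin b,
      B j j' * (star (S m (i, j')) * S m (k, j)))
  · exact Finset.sum_congr rfl fun j' _ => Finset.sum_comm
  trans (∑ m : Fin a × Fin b, ∑ j' : Fin b, ∑ j : Fin b,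
      B j j' * (star (S m (i, j')) * S m (k, j)))
  · exact Finset.sum_comm
  refine Finset.sum_congr rfl fun m _ => Finset.sum_congr rfl fun j' _ =>
    Finset.sum_congr rfl fun j _ => ?_
  ring

lemma sigma_bound {a b : ℕ} (S : Matrix (Fin a × Fin b) (Fin a × Fin b) ℂ)
    {B : Matrix (Fin b) (Fin b) ℂ} (hB : B.IsHermitian)
    (hB2 : ((1 : Matrix (Fin b) (Fin b) ℂ) - B * B).PosSemidef) :
    fn (ptraceB (((1 : Matrix (Fin a) (Fin a) ℂ) ⊗ₖ B) * (Sᴴ * S)))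
      ≤ fn (ptraceB (Sᴴ * S)) := by
  set T := resh S with hT
  set W : Matrix ((Fin a × Fin b) × Fin b) ((Fin a × Fin b) × Fin b) ℂ :=
    (1 : Matrix (Fin a × Fin b) (Fin a × Fin b) ℂ) ⊗ₖ B with hWdef
  have hW : W.IsHermitian := one_kron_herm hB
  have hW2 : ((1 : Matrix ((Fin a × Fin b) × Fin b) ((Fin a × Fin b) × Fin b) ℂ) - W * W).PosSemidef :=
    one_kron_contr hB2
  have h1 : ptraceB (((1 : Matrix (Fin a) (Fin a) ℂ) ⊗ₖ B) * (Sᴴ * S)) = (T * W * Tᴴ)ᵀ :=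
    ptraceB_structure S B
  have h2 : ptraceB (Sᴴ * S) = (T * Tᴴ)ᵀ := by
    have h0 := ptraceB_structure S (1 : Matrix (Fin b) (Fin b) ℂ)
    rw [Matrix.one_kronecker_one, Matrix.one_kronecker_one, Matrix.one_mul, Matrix.mul_one] at h0
    exact h0
  rw [h1, h2, fn_transpose, fn_transpose]
  -- fn (T*W*Tᴴ) ≤ fn (T*Tᴴ)
  have key1 : fn (T * W * Tᴴ) ^ 2 = (((Tᴴ * T)ᴴ * (W * (Tᴴ * T) * W)).trace).re := by
    rw [fn_sq]
    congr 1
    have hherm : (T * W * Tᴴ)ᴴ = T * W * Tᴴ := by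
      rw [conjTranspose_mul, conjTranspose_mul, conjTranspose_conjTranspose, hW.eq]
      simp only [Matrix.mul_assoc]
    have hherm2 : (Tᴴ * T)ᴴ = Tᴴ * T := by
      rw [conjTranspose_mul, conjTranspose_conjTranspose]
    rw [hherm, hherm2]
    have e : T * W * Tᴴ * (T * W * Tᴴ) = (T * W) * (Tᴴ * (T * (W * Tᴴ))) := by
      simp only [Matrix.mul_assoc]
    rw [e, Matrix.trace_mul_comm (T * W) (Tᴴ * (T * (W * Tᴴ)))]
    congr 1
    simp only [Matrix.mul_assoc]
  have key2 : fn (T * Tᴴ) ^ 2 = fn (Tᴴ * T) ^ 2 := by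
    have heq : ((T * Tᴴ)ᴴ * (T * Tᴴ)).trace = ((Tᴴ * T)ᴴ * (Tᴴ * T)).trace := by
      rw [conjTranspose_mul, conjTranspose_conjTranspose,
        conjTranspose_mul, conjTranspose_conjTranspose]
      have e : T * Tᴴ * (T * Tᴴ) = T * (Tᴴ * (T * Tᴴ)) := by simp only [Matrix.mul_assoc]
      rw [e, Matrix.trace_mul_comm T (Tᴴ * (T * Tᴴ))]
      congr 1
      simp only [Matrix.mul_assoc]
    rw [fn_sq, fn_sq, heq]
  have hWH : Wᴴ = W := hW.eq
  have hcontr1 : fn (W * (Tᴴ * T) * W) ≤ fn (W * (Tᴴ * T)) := by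
    apply fn_mul_right_le
    rw [hWH]; exact hW2
  have hcontr2 : fn (W * (Tᴴ * T)) ≤ fn (Tᴴ * T) := by
    apply fn_mul_left_le
    rw [hWH]; exact hW2
  have hcs : (((Tᴴ * T)ᴴ * (W * (Tᴴ * T) * W)).trace).re ≤ fn (Tᴴ * T) * fn (Tᴴ * T) := by
    calc (((Tᴴ * T)ᴴ * (W * (Tᴴ * T) * W)).trace).re
        ≤ ‖((Tᴴ * T)ᴴ * (W * (Tᴴ * T) * W)).trace‖ := Complex.re_le_norm _
      _ ≤ fn (Tᴴ * T) * fn (W * (Tᴴ * T) * W) := trace_CS _ _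
      _ ≤ fn (Tᴴ * T) * fn (Tᴴ * T) := by
          apply mul_le_mul_of_nonneg_left (hcontr1.trans hcontr2) (fn_nonneg _)
  have : fn (T * W * Tᴴ) ^ 2 ≤ fn (T * Tᴴ) ^ 2 := by
    rw [key1, key2]
    calc (((Tᴴ * T)ᴴ * (W * (Tᴴ * T) * W)).trace).re
        ≤ fn (Tᴴ * T) * fn (Tᴴ * T) := hcs
      _ = fn (Tᴴ * T) ^ 2 := by ring
  calc fn (T * W * Tᴴ) = Real.sqrt (fn (T * W * Tᴴ) ^ 2) := by rw [Real.sqrt_sq (fn_nonneg _)]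
    _ ≤ Real.sqrt (fn (T * Tᴴ) ^ 2) := Real.sqrt_le_sqrt this
    _ = fn (T * Tᴴ) := Real.sqrt_sq (fn_nonneg _)
end PtraceLemmas

open Renyi2Aux

lemma ptraceB_herm {a b : ℕ} {ρ : Matrix (Fin a × Fin b) (Fin a × Fin b) ℂ}
    (h : ρ.IsHermitian) : (ptraceB ρ)ᴴ = ptraceB ρ := by
  ext i k
  rw [conjTranspose_apply]
  show star (∑ j, ρ (k, j) (i, j)) = ∑ j, ρ (i, j) (k, j)
  rw [star_sum]
  refine Finset.sum_congr rfl fun j _ => ?_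
  have h2 := congrFun (congrFun h ((i, j) : Fin a × Fin b)) ((k, j) : Fin a × Fin b)
  rw [conjTranspose_apply] at h2
  exact h2

lemma trace_CTS_real {n m : Type*} [Fintype n] [Fintype m] (M : Matrix n m ℂ) :
    (Mᴴ * M).trace = (((fn M) ^ 2 : ℝ) : ℂ) := by
  have him : (Mᴴ * M).trace = ((∑ j, ∑ i, Complex.normSq (M i j) : ℝ) : ℂ) := by
    simp only [trace, diag_apply, mul_apply, conjTranspose_apply]
    push_cast
    refine Finset.sum_congr rfl fun j _ => Finset.sum_congr rfl fun i _ => ?_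
    rw [mul_comm]
    exact Complex.mul_conj (M i j)
  have hre : (fn M) ^ 2 = ∑ j, ∑ i, Complex.normSq (M i j) := by
    rw [fn_sq, him]
    norm_cast
  rw [him, hre]

open Renyi2Aux in
theorem renyi2_entangling_rate_bound {a b p q : ℕ}
    (ρ : Matrix (Fin a × Fin b) (Fin a × Fin b) ℂ)
    (hρ : ρ.PosSemidef) (hρtr : ρ.trace = 1)
    (A : Fin p → Matrix (Fin a) (Fin a) ℂ) (B : Fin q → Matrix (Fin b) (Fin b) ℂ)
    (hA : ∀ i, (A i).IsHermitian) (hB : ∀ j, (B j).IsHermitian)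
    (hAnorm : ∀ i, (⨆ x, |(hA i).eigenvalues x|) = 1)
    (hBnorm : ∀ j, (⨆ y, |(hB j).eigenvalues y|) = 1)
    (c : Fin p → Fin q → ℝ)
    (V : Matrix (Fin a × Fin b) (Fin a × Fin b) ℂ)
    (hV : V = ∑ i, ∑ j, (c i j : ℂ) • (A i ⊗ₖ B j)) :
    ‖2 * Complex.I * ((ptraceB ρ) * ptraceB (V * ρ - ρ * V)).trace /
        ((ptraceB ρ) * (ptraceB ρ)).trace‖ ≤ 4 * ∑ i, ∑ j, |c i j| := by
  classical
  obtain ⟨S, hS⟩ := Matrix.posSemidef_iff_eq_transpose_mul_self.mp hρ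
  have hA2 : ∀ i, ((1 : Matrix (Fin a) (Fin a) ℂ) - A i * A i).PosSemidef := by
    intro i
    refine one_sub_sq_psd (hA i) (fun x => ?_)
    have h := le_ciSup (Set.Finite.bddAbove (Set.finite_range
      (fun x => |(hA i).eigenvalues x|))) x
    rwa [hAnorm i] at h
  have hB2 : ∀ j, ((1 : Matrix (Fin b) (Fin b) ℂ) - B j * B j).PosSemidef := by
    intro j
    refine one_sub_sq_psd (hB j) (fun y => ?_)
    have h := le_ciSup (Set.Finite.bddAbove (Set.finite_range
      (fun y => |(hB j).eigenvalues y|))) y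
    rwa [hBnorm j] at h
  set P : Matrix (Fin a) (Fin a) ℂ := ptraceB ρ with hPdef
  -- σ bound
  have hsigma : ∀ j, fn (ptraceB (((1 : Matrix (Fin a) (Fin a) ℂ) ⊗ₖ B j) * ρ)) ≤ fn P := by
    intro j
    have hfp : fn P = fn (ptraceB (Sᴴ * S)) := by rw [hPdef, hS]
    rw [hfp, hS]
    exact sigma_bound S (hB j) (hB2 j)
  -- numerator identity
  have hnum : (P * ptraceB (V * ρ - ρ * V)).trace
      = ∑ i, ∑ j, (c i j : ℂ) * (((P * A i - A i * P) ⊗ₖ B j) * ρ).trace := by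
    rw [trace_mul_ptraceB]
    have e1 : (P ⊗ₖ (1 : Matrix (Fin b) (Fin b) ℂ)) * (V * ρ - ρ * V)
        = (P ⊗ₖ 1) * V * ρ - (P ⊗ₖ 1) * ρ * V := by
      rw [mul_sub]
      simp only [Matrix.mul_assoc]
    rw [e1, trace_sub, Matrix.trace_mul_cycle (P ⊗ₖ (1 : Matrix (Fin b) (Fin b) ℂ)) ρ V,
      ← trace_sub, ← sub_mul, hV]
    have e2 : (P ⊗ₖ (1 : Matrix (Fin b) (Fin b) ℂ))
          * (∑ i, ∑ j, (c i j : ℂ) • (A i ⊗ₖ B j))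
          - (∑ i, ∑ j, (c i j : ℂ) • (A i ⊗ₖ B j)) * (P ⊗ₖ (1 : Matrix (Fin b) (Fin b) ℂ))
        = ∑ i, ∑ j, (c i j : ℂ) • ((P * A i - A i * P) ⊗ₖ B j) := by
      rw [Finset.mul_sum, Finset.sum_mul, ← Finset.sum_sub_distrib]
      refine Finset.sum_congr rfl fun i _ => ?_
      rw [Finset.mul_sum, Finset.sum_mul, ← Finset.sum_sub_distrib]
      refine Finset.sum_congr rfl fun j _ => ?_
      rw [Matrix.mul_smul, Matrix.smul_mul, ← smul_sub]
      congr 1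
      rw [kron_sub_left, ← Matrix.mul_kronecker_mul, ← Matrix.mul_kronecker_mul,
        Matrix.one_mul, Matrix.mul_one]
    rw [e2, Finset.sum_mul, trace_sum]
    refine Finset.sum_congr rfl fun i _ => ?_
    rw [Finset.sum_mul, trace_sum]
    refine Finset.sum_congr rfl fun j _ => ?_
    rw [Matrix.smul_mul, trace_smul, smul_eq_mul]
  -- per-term bound
  have hterm : ∀ i j, ‖(((P * A i - A i * P) ⊗ₖ B j) * ρ).trace‖ ≤ 2 * (fn P * fn P) := by
    intro i j
    set X : Matrix (Fin a) (Fin a) ℂ := P * A i - A i * P with hX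
    have e3 : ((X ⊗ₖ B j) * ρ).trace
        = (X * ptraceB (((1 : Matrix (Fin a) (Fin a) ℂ) ⊗ₖ B j) * ρ)).trace := by
      rw [trace_mul_ptraceB]
      congr 1
      rw [← Matrix.mul_assoc, ← Matrix.mul_kronecker_mul, Matrix.mul_one, Matrix.one_mul]
    rw [e3]
    set σ := ptraceB (((1 : Matrix (Fin a) (Fin a) ℂ) ⊗ₖ B j) * ρ) with hσ
    have hcs : ‖(X * σ).trace‖ ≤ fn X * fn σ := by
      have hxx : X * σ = (Xᴴ)ᴴ * σ := by rw [conjTranspose_conjTranspose]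
      rw [hxx]
      calc ‖((Xᴴ)ᴴ * σ).trace‖ ≤ fn (Xᴴ) * fn σ := trace_CS _ _
        _ = fn X * fn σ := by rw [fn_conjTranspose]
    have hr : ((1 : Matrix (Fin a) (Fin a) ℂ) - A i * (A i)ᴴ).PosSemidef := by
      rw [(hA i).eq]; exact hA2 i
    have hl : ((1 : Matrix (Fin a) (Fin a) ℂ) - (A i)ᴴ * A i).PosSemidef := by
      rw [(hA i).eq]; exact hA2 i
    have hXb : fn X ≤ 2 * fn P := by
      calc fn X ≤ fn (P * A i) + fn (A i * P) := fn_sub_le _ _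
        _ ≤ fn P + fn P := add_le_add (fn_mul_right_le P (A i) hr)
            (fn_mul_left_le (A i) P hl)
        _ = 2 * fn P := by ring
    calc ‖(X * σ).trace‖ ≤ fn X * fn σ := hcs
      _ ≤ (2 * fn P) * fn P := by
          exact mul_le_mul hXb (hsigma j) (fn_nonneg _)
            (mul_nonneg (by norm_num) (fn_nonneg P))
      _ = 2 * (fn P * fn P) := by ring
  -- numerator norm bound
  have hN : ‖(P * ptraceB (V * ρ - ρ * V)).trace‖
      ≤ (∑ i, ∑ j, |c i j|) * (2 * (fn P * fn P)) := by
    rw [hnum]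
    refine (norm_sum_le _ _).trans ?_
    rw [Finset.sum_mul]
    refine Finset.sum_le_sum fun i _ => ?_
    refine (norm_sum_le _ _).trans ?_
    rw [Finset.sum_mul]
    refine Finset.sum_le_sum fun j _ => ?_
    rw [norm_mul, Complex.norm_real]
    exact mul_le_mul_of_nonneg_left (hterm i j) (abs_nonneg _)
  -- denominator
  have hPh : Pᴴ = P := ptraceB_herm hρ.1
  have hD : (P * P).trace = (((fn P) ^ 2 : ℝ) : ℂ) := by
    nth_rewrite 1 [← hPh]
    exact trace_CTS_real P
  rw [hD]
  by_cases h0 : fn P = 0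
  · rw [h0]
    norm_num
    positivity
  · have hfp : 0 < fn P := (fn_nonneg P).lt_of_ne (Ne.symm h0)
    have hpos : (0 : ℝ) < fn P ^ 2 := by positivity
    rw [norm_div, norm_mul, norm_mul, Complex.norm_I, mul_one, Complex.norm_real]
    rw [Real.norm_of_nonneg hpos.le, div_le_iff₀ hpos]
    have h2 : ‖(2 : ℂ)‖ = 2 := by norm_num
    rw [h2]
    calc 2 * ‖(P * ptraceB (V * ρ - ρ * V)).trace‖
        ≤ 2 * ((∑ i, ∑ j, |c i j|) * (2 * (fn P * fn P))) := by
          exact mul_le_mul_of_nonneg_left hN (by norm_num)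
      _ = 4 * (∑ i, ∑ j, |c i j|) * fn P ^ 2 := by ring
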